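/- (Graham–Pollak) For every n ≥ 2, N(Kₙ) = n − 1: the complete graph on n vertices admits an addressing of length n − 1, and admits no addressing of length less than n − 1. -/
import Mathlib


/-- An addressing of length `t` of a graph `G`: each vertex gets a `t`-tuple over a
three-symbol alphabet (`0` = symbol "0", `1` = symbol "a", `2` = symbol "b") such that the
graph distance between any two vertices equals the number of coordinates where one address
has `a` and the other has `b`. -/
def IsAddressing {V : Type*} (G : SimpleGraph V) {t : ℕ} (f : V → Fin t → Fin 3) : Prop :=
  ∀ u v : V, G.dist u v =
    (Finset.univ.filter fun i =>
      (f u i = 1 ∧ f v i = 2) ∨ (f u i = 2 ∧ f v i = 1)).card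

lemma ind3 (a b : Fin 3) :
    (if ((a = 1 ∧ b = 2) ∨ (a = 2 ∧ b = 1)) then (1:ℝ) else 0)
    = (if a = 1 then (1:ℝ) else 0) * (if b = 2 then 1 else 0)
      + (if a = 2 then (1:ℝ) else 0) * (if b = 1 then 1 else 0) := by
  fin_cases a <;> fin_cases b <;> simp


/-- Graham–Pollak: for `n ≥ 2`, the complete graph `Kₙ` admits an addressing
of length `n − 1` and no shorter one; that is, `N(Kₙ) = n − 1`. -/
theorem grahamPollak (n : ℕ) (hn : 2 ≤ n) :
    (∃ f : Fin n → Fin (n - 1) → Fin 3, IsAddressing (⊤ : SimpleGraph (Fin n)) f) ∧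
      ∀ (t : ℕ) (f : Fin n → Fin t → Fin 3),
        IsAddressing (⊤ : SimpleGraph (Fin n)) f → n - 1 ≤ t := by
  constructor
  · classical
    set f : Fin n → Fin (n - 1) → Fin 3 :=
      fun v j => if (j : ℕ) < (v : ℕ) then 1 else if (j : ℕ) = (v : ℕ) then 2 else 0 with hf
    have hval : ∀ (v : Fin n) (j : Fin (n-1)),
        (f v j = 1 ↔ (j:ℕ) < (v:ℕ)) ∧ (f v j = 2 ↔ (j:ℕ) = (v:ℕ)) := by
      intro v j
      simp only [hf]
      split_ifs with h1 h2 <;> constructor <;> constructor <;> intro h <;>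
        first | omega | rfl | exact absurd h (by decide)
    have key : ∀ u v : Fin n, (u:ℕ) < (v:ℕ) →
        (Finset.univ.filter fun i =>
          (f u i = 1 ∧ f v i = 2) ∨ (f u i = 2 ∧ f v i = 1)).card = 1 := by
      intro u v huv
      have hu : (u:ℕ) < n - 1 := by have := v.isLt; omega
      rw [Finset.card_eq_one]
      refine ⟨⟨(u:ℕ), hu⟩, ?_⟩
      rw [Finset.eq_singleton_iff_unique_mem]
      constructor
      · simp only [Finset.mem_filter, Finset.mem_univ, true_and]
        right
        exact ⟨((hval u _).2).mpr rfl, ((hval v _).1).mpr huv⟩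
      · intro i hi
        simp only [Finset.mem_filter, Finset.mem_univ, true_and] at hi
        rw [Fin.ext_iff]
        show (i : ℕ) = (u : ℕ)
        rcases hi with ⟨h1, h2⟩ | ⟨h1, h2⟩
        · have h3 := ((hval u i).1).mp h1
          have h4 := ((hval v i).2).mp h2
          omega
        · have h3 := ((hval u i).2).mp h1
          omega
    refine ⟨f, ?_⟩
    intro u v
    rcases eq_or_ne u v with rfl | huv
    · rw [SimpleGraph.dist_self]
      symm
      rw [Finset.card_eq_zero, Finset.filter_eq_empty_iff]
      rintro i - (⟨h1, h2⟩ | ⟨h1, h2⟩) <;> rw [h1] at h2 <;> exact absurd h2 (by decide)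
    · have hadj : (⊤ : SimpleGraph (Fin n)).Adj u v := huv
      rw [SimpleGraph.dist_eq_one_iff_adj.mpr hadj]
      rcases lt_or_gt_of_ne (fun h : (u:ℕ) = (v:ℕ) => huv (Fin.ext h)) with h | h
      · exact (key u v h).symm
      · have hswap : (Finset.univ.filter fun i =>
            (f u i = 1 ∧ f v i = 2) ∨ (f u i = 2 ∧ f v i = 1)) =
            (Finset.univ.filter fun i =>
            (f v i = 1 ∧ f u i = 2) ∨ (f v i = 2 ∧ f u i = 1)) := by
          ext i
          simp only [Finset.mem_filter]
          tauto
        rw [hswap]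
        exact (key v u h).symm
  · intro t f haddr
    classical
    by_contra hlt
    push_neg at hlt
    have ht1 : t + 1 < n := by omega
    -- coefficient matrix
    set c : Fin (t+1) → Fin n → ℝ :=
      fun j v => if h : (j : ℕ) < t then (if f v ⟨(j:ℕ), h⟩ = 1 then 1 else 0) else 1 with hc
    set L : (Fin n → ℝ) →ₗ[ℝ] (Fin (t+1) → ℝ) :=
      LinearMap.pi (fun j => ∑ v, c j v • (LinearMap.proj v : (Fin n → ℝ) →ₗ[ℝ] ℝ)) with hL
    have hLapp : ∀ (x : Fin n → ℝ) (j : Fin (t+1)), L x j = ∑ v, c j v * x v := by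
      intro x j
      simp [hL, LinearMap.pi_apply, LinearMap.sum_apply, LinearMap.smul_apply, smul_eq_mul]
    -- L is not injective
    have hninj : ¬ Function.Injective L := by
      intro hinj
      have h1 : n ≤ t + 1 := by
        have := LinearMap.finrank_le_finrank_of_injective hinj
        rwa [Module.finrank_fin_fun, Module.finrank_fin_fun] at this
      omega
    rw [← LinearMap.ker_eq_bot] at hninj
    obtain ⟨x, hxker, hx0⟩ := Submodule.ne_bot_iff _ |>.mp hninj
    have hLx : ∀ j, L x j = 0 := by
      intro j
      have : L x = 0 := hxker
      rw [this]; rfl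
    -- consequences
    have hA : ∀ i : Fin t, ∑ v, (if f v i = 1 then (1:ℝ) else 0) * x v = 0 := by
      intro i
      have := hLx ⟨(i:ℕ), by omega⟩
      rw [hLapp] at this
      simpa [hc, i.isLt] using this
    have hS : ∑ v, x v = 0 := by
      have := hLx ⟨t, by omega⟩
      rw [hLapp] at this
      simpa [hc] using this
    -- distance facts
    have hdist : ∀ u v : Fin n,
        ((Finset.univ.filter fun i =>
          (f u i = 1 ∧ f v i = 2) ∨ (f u i = 2 ∧ f v i = 1)).card : ℝ)
        = if u = v then 0 else 1 := by
      intro u v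
      rw [← haddr u v]
      rcases eq_or_ne u v with rfl | huv
      · simp [SimpleGraph.dist_self]
      · rw [SimpleGraph.dist_eq_one_iff_adj.mpr (by exact huv : (⊤ : SimpleGraph (Fin n)).Adj u v)]
        simp [huv]
    -- the double sum, computed two ways
    set S : ℝ := ∑ u, ∑ v, x u * x v *
      ((Finset.univ.filter fun i =>
          (f u i = 1 ∧ f v i = 2) ∨ (f u i = 2 ∧ f v i = 1)).card : ℝ) with hSdef
    have way1 : S = 0 := by
      have hcard : ∀ u v : Fin n,
          ((Finset.univ.filter fun i =>
            (f u i = 1 ∧ f v i = 2) ∨ (f u i = 2 ∧ f v i = 1)).card : ℝ)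
          = ∑ i : Fin t, ((if f u i = 1 then (1:ℝ) else 0) * (if f v i = 2 then 1 else 0)
              + (if f u i = 2 then (1:ℝ) else 0) * (if f v i = 1 then 1 else 0)) := by
        intro u v
        rw [Finset.card_filter]
        push_cast
        refine Finset.sum_congr rfl fun i _ => ?_
        exact ind3 (f u i) (f v i)
      have expand : ∀ i : Fin t,
          (∑ u, (if f u i = 1 then (1:ℝ) else 0) * x u)
            * (∑ v, (if f v i = 2 then (1:ℝ) else 0) * x v)
          + (∑ u, (if f u i = 2 then (1:ℝ) else 0) * x u)
            * (∑ v, (if f v i = 1 then (1:ℝ) else 0) * x v)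
          = ∑ u, ∑ v, x u * x v *
              ((if f u i = 1 then (1:ℝ) else 0) * (if f v i = 2 then 1 else 0)
              + (if f u i = 2 then (1:ℝ) else 0) * (if f v i = 1 then 1 else 0)) := by
        intro i
        rw [Finset.sum_mul_sum, Finset.sum_mul_sum, ← Finset.sum_add_distrib]
        refine Finset.sum_congr rfl fun u _ => ?_
        rw [← Finset.sum_add_distrib]
        refine Finset.sum_congr rfl fun v _ => ?_
        ring
      have swap : ∀ (g : Fin n → Fin n → Fin t → ℝ),
          ∑ u, ∑ v, ∑ i, g u v i = ∑ i, ∑ u, ∑ v, g u v i := by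
        intro g
        have h1 : ∀ u : Fin n, ∑ v, ∑ i, g u v i = ∑ i, ∑ v, g u v i :=
          fun u => Finset.sum_comm
        simp_rw [h1]
        exact Finset.sum_comm
      have lhs_eq : S = ∑ i : Fin t, ∑ u, ∑ v, x u * x v *
          ((if f u i = 1 then (1:ℝ) else 0) * (if f v i = 2 then 1 else 0)
          + (if f u i = 2 then (1:ℝ) else 0) * (if f v i = 1 then 1 else 0)) := by
        rw [hSdef]
        simp_rw [hcard, Finset.mul_sum]
        exact swap _
      rw [lhs_eq]
      refine Finset.sum_eq_zero fun i _ => ?_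
      rw [← expand i, hA i]
      ring
    have way2 : S = - ∑ u, (x u)^2 := by
      rw [hSdef]
      have : ∀ u : Fin n, (∑ v, x u * x v *
          ((Finset.univ.filter fun i =>
            (f u i = 1 ∧ f v i = 2) ∨ (f u i = 2 ∧ f v i = 1)).card : ℝ)) = - (x u)^2 := by
        intro u
        have : ∀ v : Fin n, x u * x v *
            ((Finset.univ.filter fun i =>
              (f u i = 1 ∧ f v i = 2) ∨ (f u i = 2 ∧ f v i = 1)).card : ℝ)
            = x u * x v - (if v = u then x u * x v else 0) := by
          intro v
          rw [hdist u v]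
          rcases eq_or_ne u v with rfl | huv
          · simp
          · simp [huv, Ne.symm huv]
        simp_rw [this, Finset.sum_sub_distrib, Finset.sum_ite_eq']
        simp [← Finset.mul_sum, hS]
        ring
      simp_rw [this]
      simp [Finset.sum_neg_distrib]
    have hzero : ∑ u, (x u)^2 = 0 := by
      have := way1.symm.trans way2
      linarith
    have : ∀ u ∈ Finset.univ, (x u)^2 = 0 := by
      exact (Finset.sum_eq_zero_iff_of_nonneg (fun u _ => sq_nonneg (x u))).mp hzero
    apply hx0
    funext u
    have := this u (Finset.mem_univ u)
    exact pow_eq_zero_iff (by norm_num) |>.mp this
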